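/- Let f and g be discrete probability distributions on the real line with cumulative distribution functions F and G, and let h : ℝ≥0 → ℝ≥0 be increasing and convex. Then the Monge-Kantorovich cost for the ground cost c(x,y) = h(|x-y|) satisfies MK_c(f,g) = ∫_0^1 h(|F^{-1}(t) - G^{-1}(t)|) dt, where F^{-1}(t) = inf{s : F(s) > t} denotes the pseudo-inverse (quantile function). -/

import Mathlib

open Finset MeasureTheory

/-- Pseudo-inverse (quantile function) of a nondecreasing function:
`F⁻¹(t) = inf {s : F(s) > t}`. -/
noncomputable def pseudoInv (F : ℝ → ℝ) (t : ℝ) : ℝ := sInf {s : ℝ | t < F s}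


lemma convex_slide (φ : ℝ → ℝ) (hφ : ConvexOn ℝ Set.univ φ) {u a b v : ℝ}
    (h1 : u ≤ a) (h2 : u ≤ b) (h3 : a ≤ v) (h4 : b ≤ v) (hab : a + b = u + v) :
    φ a + φ b ≤ φ u + φ v := by
  rcases eq_or_lt_of_le (h1.trans h3) with he | hlt
  · have ha : a = u := le_antisymm (by linarith) h1
    have hb : b = u := le_antisymm (by linarith) h2
    rw [ha, hb, ← he]
  · set lam := (v - a) / (v - u) with hlam
    have hvu : 0 < v - u := by linarith
    have hl0 : 0 ≤ lam := div_nonneg (by linarith) hvu.le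
    have hl1 : lam ≤ 1 := (div_le_one hvu).2 (by linarith)
    have hkey : lam * (v - u) = v - a := div_mul_cancel₀ _ hvu.ne'
    have hmix : lam * u + (1 - lam) * v = a := by linear_combination -hkey
    have hmix' : (1 - lam) * u + lam * v = b := by linear_combination hkey - hab
    have e1 := hφ.2 (Set.mem_univ u) (Set.mem_univ v) hl0
      (by linarith : (0:ℝ) ≤ 1 - lam) (by ring)
    have e2 := hφ.2 (Set.mem_univ u) (Set.mem_univ v)
      (by linarith : (0:ℝ) ≤ 1 - lam) hl0 (by ring)
    rw [smul_eq_mul, smul_eq_mul, smul_eq_mul, smul_eq_mul, hmix] at e1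
    rw [smul_eq_mul, smul_eq_mul, smul_eq_mul, smul_eq_mul, hmix'] at e2
    calc φ a + φ b ≤ (lam * φ u + (1 - lam) * φ v) + ((1 - lam) * φ u + lam * φ v) :=
          add_le_add e1 e2
      _ = φ u + φ v := by ring

lemma abs_convexOn (h : ℝ → ℝ) (hconv : ConvexOn ℝ (Set.Ici 0) h)
    (hmono : MonotoneOn h (Set.Ici 0)) : ConvexOn ℝ Set.univ (fun u => h |u|) := by
  refine ⟨convex_univ, ?_⟩
  intro p _ q _ s t hs ht hst
  have habs : |s • p + t • q| ≤ s * |p| + t * |q| := by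
    calc |s • p + t • q| ≤ |s • p| + |t • q| := abs_add_le _ _
      _ = s * |p| + t * |q| := by
          rw [smul_eq_mul, smul_eq_mul, abs_mul, abs_mul, abs_of_nonneg hs, abs_of_nonneg ht]
  have h1 : h |s • p + t • q| ≤ h (s * |p| + t * |q|) := by
    refine hmono (Set.mem_Ici.2 (abs_nonneg _)) ?_ habs
    exact add_nonneg (mul_nonneg hs (abs_nonneg _)) (mul_nonneg ht (abs_nonneg _))
  refine h1.trans ?_
  have := hconv.2 (Set.mem_Ici.2 (abs_nonneg p)) (Set.mem_Ici.2 (abs_nonneg q)) hs ht hst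
  simpa using this

lemma minmax_overlap (a b c d : ℝ) (hab : a ≤ b) (hcd : c ≤ d) :
    max 0 (min b d - max a c) = min b d - min b c - min a d + min a c := by
  rcases le_total a c with h1 | h1 <;> rcases le_total b d with h2 | h2 <;>
    rcases le_total b c with h3 | h3 <;> rcases le_total a d with h4 | h4 <;>
    simp [min_def, max_def] <;> split_ifs <;> linarith

lemma vol_Ioo_inter_Ico (a b : ℝ) (ha : 0 ≤ a) (hb : b ≤ 1) :
    (volume (Set.Ioo (0:ℝ) 1 ∩ Set.Ico a b)).toReal = max 0 (b - a) := by
  rcases le_total b a with hba | hba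
  · have he : Set.Ico a b = ∅ := Set.Ico_eq_empty (not_lt.2 hba)
    rw [he, Set.inter_empty]
    simp [max_eq_left (by linarith : b - a ≤ 0)]
  · have hsub1 : Set.Ioo a b ⊆ Set.Ioo (0:ℝ) 1 ∩ Set.Ico a b := by
      intro t ht
      exact ⟨⟨lt_of_le_of_lt ha ht.1, lt_of_lt_of_le ht.2 hb⟩, ⟨ht.1.le, ht.2⟩⟩
    have hsub2 : Set.Ioo (0:ℝ) 1 ∩ Set.Ico a b ⊆ Set.Ico a b := Set.inter_subset_right
    have h1 := measure_mono (μ := volume) hsub1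
    have h2 := measure_mono (μ := volume) hsub2
    rw [Real.volume_Ioo] at h1
    rw [Real.volume_Ico] at h2
    have heq : volume (Set.Ioo (0:ℝ) 1 ∩ Set.Ico a b) = ENNReal.ofReal (b - a) :=
      le_antisymm h2 h1
    rw [heq, ENNReal.toReal_ofReal (by linarith)]
    exact (max_eq_right (by linarith)).symm

/-- partial sums of a `Fin N`-indexed family. -/
def cumS {N : ℕ} (f : Fin N → ℝ) (n : ℕ) : ℝ := ∑ i : Fin N, if (i:ℕ) < n then f i else 0

lemma cumS_zero {N : ℕ} (f : Fin N → ℝ) : cumS f 0 = 0 := by simp [cumS]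

lemma cumS_ge {N : ℕ} (f : Fin N → ℝ) {n : ℕ} (hn : N ≤ n) : cumS f n = ∑ i, f i := by
  unfold cumS
  refine Finset.sum_congr rfl fun i _ => ?_
  rw [if_pos (lt_of_lt_of_le i.isLt hn)]

lemma cumS_succ {N : ℕ} (f : Fin N → ℝ) {n : ℕ} (hn : n < N) :
    cumS f (n + 1) = cumS f n + f ⟨n, hn⟩ := by
  unfold cumS
  have : ∀ i : Fin N, (if (i:ℕ) < n + 1 then f i else 0) =
      (if (i:ℕ) < n then f i else 0) + (if i = ⟨n, hn⟩ then f i else 0) := by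
    intro i
    rcases lt_trichotomy (i:ℕ) n with hi | hi | hi
    · rw [if_pos (Nat.lt_succ_of_lt hi), if_pos hi, if_neg, add_zero]
      intro hc; rw [hc] at hi; simp at hi
    · have : i = ⟨n, hn⟩ := Fin.ext hi
      rw [if_pos (by omega), if_neg (by omega), if_pos this, zero_add]
    · rw [if_neg (by omega), if_neg (by omega), if_neg, add_zero]
      intro hc; rw [hc] at hi; simp at hi
  rw [Finset.sum_congr rfl fun i _ => this i, Finset.sum_add_distrib,
    Finset.sum_ite_eq' Finset.univ ⟨n, hn⟩ f, if_pos (Finset.mem_univ _)]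

lemma cumS_mono {N : ℕ} (f : Fin N → ℝ) (hf : ∀ i, 0 ≤ f i) : Monotone (cumS f) := by
  intro n m hnm
  refine Finset.sum_le_sum fun i _ => ?_
  by_cases hi : (i:ℕ) < n
  · rw [if_pos hi, if_pos (lt_of_lt_of_le hi hnm)]
  · rw [if_neg hi]; split_ifs with h' <;> [exact hf i; exact le_refl 0]

lemma cumS_nonneg {N : ℕ} (f : Fin N → ℝ) (hf : ∀ i, 0 ≤ f i) (n : ℕ) : 0 ≤ cumS f n := by
  rw [← cumS_zero f]; exact cumS_mono f hf (Nat.zero_le n)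

lemma cumS_le_one {N : ℕ} (f : Fin N → ℝ) (hf : ∀ i, 0 ≤ f i) (hf1 : ∑ i, f i = 1) (n : ℕ) :
    cumS f n ≤ 1 := by
  rcases le_total n N with hn | hn
  · calc cumS f n ≤ cumS f N := cumS_mono f hf hn
      _ = 1 := by rw [cumS_ge f le_rfl, hf1]
  · rw [cumS_ge f hn, hf1]

lemma quantile_eq {N : ℕ} (f : Fin N → ℝ) (x : Fin N → ℝ) (hx : Monotone x)
    (hf : ∀ i, 0 ≤ f i) (i : Fin N) (t : ℝ)
    (h1 : cumS f i ≤ t) (h2 : t < cumS f ((i:ℕ) + 1)) :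
    pseudoInv (fun s => ∑ i, if x i < s then f i else 0) t = x i := by
  have hset : {s : ℝ | t < ∑ i', if x i' < s then f i' else 0} = Set.Ioi (x i) := by
    ext s
    simp only [Set.mem_setOf_eq, Set.mem_Ioi]
    constructor
    · intro hs
      by_contra hc
      push_neg at hc
      have hle : (∑ i', if x i' < s then f i' else 0) ≤ cumS f i := by
        refine Finset.sum_le_sum fun i' _ => ?_
        by_cases hi' : x i' < s
        · rw [if_pos hi']
          have : (i':ℕ) < (i:ℕ) := by
            by_contra hcc
            push_neg at hcc
            have : x i ≤ x i' := hx (by exact hcc : i ≤ i')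
            linarith
          rw [if_pos this]
        · rw [if_neg hi']; split_ifs <;> [exact hf i'; exact le_refl 0]
      linarith
    · intro hs
      have hge : cumS f ((i:ℕ) + 1) ≤ ∑ i', if x i' < s then f i' else 0 := by
        refine Finset.sum_le_sum fun i' _ => ?_
        by_cases hi' : (i':ℕ) < (i:ℕ) + 1
        · rw [if_pos hi']
          have hle : i' ≤ i := by exact Nat.lt_succ_iff.mp hi'
          rw [if_pos (lt_of_le_of_lt (hx hle) hs)]
        · rw [if_neg hi']; split_ifs <;> [exact hf i'; exact le_refl 0]
      linarith
  rw [pseudoInv, hset, csInf_Ioi]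

lemma exists_cell {N : ℕ} (f : Fin N → ℝ) (hf : ∀ i, 0 ≤ f i) (hf1 : ∑ i, f i = 1)
    (t : ℝ) (h0 : 0 ≤ t) (h1 : t < 1) :
    ∃ i : Fin N, cumS f (i:ℕ) ≤ t ∧ t < cumS f ((i:ℕ) + 1) := by
  have hN : 0 < N := by
    by_contra hc
    push_neg at hc
    interval_cases N
    simp at hf1
  have hex : ∃ n, t < cumS f (n + 1) := by
    refine ⟨N - 1, ?_⟩
    have : N - 1 + 1 = N := Nat.succ_pred_eq_of_pos hN
    rw [this, cumS_ge f le_rfl, hf1]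
    exact h1
  classical
  let n₀ := Nat.find hex
  have hn₀ : t < cumS f (n₀ + 1) := Nat.find_spec hex
  have hlow : cumS f n₀ ≤ t := by
    rcases Nat.eq_zero_or_pos n₀ with h | h
    · rw [h, cumS_zero]; exact h0
    · have := Nat.find_min hex (Nat.sub_lt h Nat.one_pos)
      push_neg at this
      have heq : n₀ - 1 + 1 = n₀ := Nat.succ_pred_eq_of_pos h
      rwa [heq] at this
  have hn₀N : n₀ < N := by
    by_contra hc
    push_neg at hc
    rw [cumS_ge f hc, hf1] at hlow
    linarith
  exact ⟨⟨n₀, hn₀N⟩, hlow, hn₀⟩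

lemma cell_unique {N : ℕ} (f : Fin N → ℝ) (hf : ∀ i, 0 ≤ f i) (i i' : Fin N) (t : ℝ)
    (ha : cumS f i ≤ t) (hb : t < cumS f ((i:ℕ) + 1))
    (ha' : cumS f i' ≤ t) (hb' : t < cumS f ((i':ℕ) + 1)) : i = i' := by
  by_contra hc
  rcases lt_or_gt_of_ne (fun h => hc (Fin.ext h) : (i:ℕ) ≠ (i':ℕ)) with hlt | hlt
  · exact absurd (le_trans (cumS_mono f hf hlt) ha') (not_le.2 hb)
  · exact absurd (le_trans (cumS_mono f hf hlt) ha) (not_le.2 hb')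

noncomputable def astar {N M : ℕ} (f : Fin N → ℝ) (g : Fin M → ℝ) (i : Fin N) (j : Fin M) : ℝ :=
  max 0 (min (cumS f ((i:ℕ) + 1)) (cumS g ((j:ℕ) + 1)) - max (cumS f (i:ℕ)) (cumS g (j:ℕ)))

lemma astar_nonneg {N M : ℕ} (f : Fin N → ℝ) (g : Fin M → ℝ) (i : Fin N) (j : Fin M) :
    0 ≤ astar f g i j := le_max_left _ _

lemma astar_eq {N M : ℕ} (f : Fin N → ℝ) (g : Fin M → ℝ)
    (hf : ∀ i, 0 ≤ f i) (hg : ∀ j, 0 ≤ g j) (i : Fin N) (j : Fin M) :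
    astar f g i j =
      min (cumS f ((i:ℕ)+1)) (cumS g ((j:ℕ)+1)) - min (cumS f (i:ℕ)) (cumS g ((j:ℕ)+1))
      - min (cumS f ((i:ℕ)+1)) (cumS g (j:ℕ)) + min (cumS f (i:ℕ)) (cumS g (j:ℕ)) := by
  have h1 : cumS f (i:ℕ) ≤ cumS f ((i:ℕ)+1) := cumS_mono f hf (Nat.le_succ _)
  have h2 : cumS g (j:ℕ) ≤ cumS g ((j:ℕ)+1) := cumS_mono g hg (Nat.le_succ _)
  rw [astar, minmax_overlap _ _ _ _ h1 h2]
  ring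

lemma astar_row {N M : ℕ} (f : Fin N → ℝ) (g : Fin M → ℝ)
    (hf : ∀ i, 0 ≤ f i) (hg : ∀ j, 0 ≤ g j)
    (hf1 : ∑ i, f i = 1) (hg1 : ∑ j, g j = 1) (i : Fin N) :
    ∑ j, astar f g i j = f i := by
  set ψ : ℕ → ℝ := fun k =>
    min (cumS f ((i:ℕ)+1)) (cumS g k) - min (cumS f (i:ℕ)) (cumS g k) with hψ
  have key : ∀ j : Fin M, astar f g i j = ψ ((j:ℕ)+1) - ψ (j:ℕ) := by
    intro j
    rw [astar_eq f g hf hg, hψ]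
    ring
  rw [Finset.sum_congr rfl fun j _ => key j]
  rw [Fin.sum_univ_eq_sum_range (fun k => ψ (k+1) - ψ k) M, Finset.sum_range_sub ψ M]
  have hgM : cumS g M = 1 := by rw [cumS_ge g le_rfl, hg1]
  have hg0 : cumS g 0 = 0 := cumS_zero g
  have hfi1 : cumS f ((i:ℕ)+1) ≤ 1 := cumS_le_one f hf hf1 _
  have hfi0 : cumS f (i:ℕ) ≤ 1 := cumS_le_one f hf hf1 _
  have hsucc : cumS f ((i:ℕ)+1) = cumS f (i:ℕ) + f i := by
    rw [cumS_succ f i.isLt]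
  rw [hψ]
  simp only [hgM, hg0]
  rw [min_eq_left hfi1, min_eq_left hfi0,
    min_eq_right (cumS_nonneg f hf _), min_eq_right (cumS_nonneg f hf _)]
  rw [hsucc]
  ring

lemma astar_col {N M : ℕ} (f : Fin N → ℝ) (g : Fin M → ℝ)
    (hf : ∀ i, 0 ≤ f i) (hg : ∀ j, 0 ≤ g j)
    (hf1 : ∑ i, f i = 1) (hg1 : ∑ j, g j = 1) (j : Fin M) :
    ∑ i, astar f g i j = g j := by
  set χ : ℕ → ℝ := fun k =>
    min (cumS f k) (cumS g ((j:ℕ)+1)) - min (cumS f k) (cumS g (j:ℕ)) with hχ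
  have key : ∀ i : Fin N, astar f g i j = χ ((i:ℕ)+1) - χ (i:ℕ) := by
    intro i
    rw [astar_eq f g hf hg, hχ]
    ring
  rw [Finset.sum_congr rfl fun i _ => key i]
  rw [Fin.sum_univ_eq_sum_range (fun k => χ (k+1) - χ k) N, Finset.sum_range_sub χ N]
  have hfN : cumS f N = 1 := by rw [cumS_ge f le_rfl, hf1]
  have hf0 : cumS f 0 = 0 := cumS_zero f
  have hgj1 : cumS g ((j:ℕ)+1) ≤ 1 := cumS_le_one g hg hg1 _
  have hgj0 : cumS g (j:ℕ) ≤ 1 := cumS_le_one g hg hg1 _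
  have hsucc : cumS g ((j:ℕ)+1) = cumS g (j:ℕ) + g j := by
    rw [cumS_succ g j.isLt]
  rw [hχ]
  simp only [hfN, hf0]
  rw [min_eq_right hgj1, min_eq_right hgj0,
    min_eq_left (cumS_nonneg g hg _), min_eq_left (cumS_nonneg g hg _)]
  rw [hsucc]
  ring

lemma integral_eq_astar_cost {N M : ℕ}
    (f : Fin N → ℝ) (g : Fin M → ℝ) (x : Fin N → ℝ) (y : Fin M → ℝ)
    (hx : Monotone x) (hy : Monotone y)
    (hf : ∀ i, 0 ≤ f i) (hg : ∀ j, 0 ≤ g j)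
    (hf1 : ∑ i, f i = 1) (hg1 : ∑ j, g j = 1) (h : ℝ → ℝ) :
    (∫ t in (0:ℝ)..1,
      h |pseudoInv (fun s => ∑ i, if x i < s then f i else 0) t -
         pseudoInv (fun s => ∑ j, if y j < s then g j else 0) t|) =
    ∑ i, ∑ j, astar f g i j * h |x i - y j| := by
  classical
  set ind : Fin N → Fin M → ℝ → ℝ := fun i j =>
    Set.indicator (Set.Ico (max (cumS f (i:ℕ)) (cumS g (j:ℕ)))
       (min (cumS f ((i:ℕ)+1)) (cumS g ((j:ℕ)+1)))) (fun _ => h |x i - y j|) with hind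
  have hpt : ∀ t ∈ Set.Ioo (0:ℝ) 1,
      h |pseudoInv (fun s => ∑ i, if x i < s then f i else 0) t -
         pseudoInv (fun s => ∑ j, if y j < s then g j else 0) t| =
      ∑ i, ∑ j, ind i j t := by
    intro t ht
    obtain ⟨i₀, hi1, hi2⟩ := exists_cell f hf hf1 t ht.1.le ht.2
    obtain ⟨j₀, hj1, hj2⟩ := exists_cell g hg hg1 t ht.1.le ht.2
    rw [quantile_eq f x hx hf i₀ t hi1 hi2, quantile_eq g y hy hg j₀ t hj1 hj2]
    rw [Finset.sum_eq_single i₀]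
    · rw [Finset.sum_eq_single j₀]
      · rw [hind]
        simp only []
        rw [Set.indicator_of_mem]
        exact Set.mem_Ico.2 ⟨max_le hi1 hj1, lt_min hi2 hj2⟩
      · intro j _ hj
        rw [hind]
        simp only []
        rw [Set.indicator_of_notMem]
        intro hmem
        rcases Set.mem_Ico.1 hmem with ⟨hm1, hm2⟩
        exact hj (cell_unique g hg j j₀ t (le_trans (le_max_right _ _) hm1)
          (lt_of_lt_of_le hm2 (min_le_right _ _)) hj1 hj2)
      · intro hcon
        exact absurd (Finset.mem_univ j₀) hcon
    · intro i _ hi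
      refine Finset.sum_eq_zero fun j _ => ?_
      rw [hind]
      simp only []
      rw [Set.indicator_of_notMem]
      intro hmem
      rcases Set.mem_Ico.1 hmem with ⟨hm1, hm2⟩
      exact hi (cell_unique f hf i i₀ t (le_trans (le_max_left _ _) hm1)
        (lt_of_lt_of_le hm2 (min_le_left _ _)) hi1 hi2)
    · intro hcon
      exact absurd (Finset.mem_univ i₀) hcon
  have hintg : ∀ (i : Fin N) (j : Fin M),
      Integrable (ind i j) (volume.restrict (Set.Ioo (0:ℝ) 1)) := by
    intro i j
    rw [hind]
    refine Integrable.indicator ?_ measurableSet_Ico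
    refine (integrableOn_const_iff).2 (Or.inr ?_)
    rw [Real.volume_Ioo]
    exact ENNReal.ofReal_lt_top
  rw [intervalIntegral.integral_of_le (by norm_num : (0:ℝ) ≤ 1),
    MeasureTheory.integral_Ioc_eq_integral_Ioo,
    MeasureTheory.setIntegral_congr_fun measurableSet_Ioo hpt]
  rw [MeasureTheory.integral_finset_sum _ (fun i _ => integrable_finset_sum _ (fun j _ => hintg i j))]
  refine Finset.sum_congr rfl fun i _ => ?_
  rw [MeasureTheory.integral_finset_sum _ (fun j _ => hintg i j)]
  refine Finset.sum_congr rfl fun j _ => ?_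
  rw [hind]
  simp only []
  rw [MeasureTheory.setIntegral_indicator measurableSet_Ico,
    MeasureTheory.setIntegral_const]
  rw [measureReal_def, vol_Ioo_inter_Ico _ _
    (le_trans (cumS_nonneg f hf _) (le_max_left _ _))
    (le_trans (min_le_left _ _) (cumS_le_one f hf hf1 _))]
  rw [smul_eq_mul, astar]

/-- Elementary exchange matrix: +1 at (i,j') and (i',j), -1 at (i,j) and (i',j'). -/
def Epert {N M : ℕ} (i i' : Fin N) (j j' : Fin M) (a : Fin N) (b : Fin M) : ℝ :=
  (if a = i ∧ b = j' then (1:ℝ) else 0) + (if a = i' ∧ b = j then 1 else 0)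
  - (if a = i ∧ b = j then 1 else 0) - (if a = i' ∧ b = j' then 1 else 0)

lemma sum_pt {N M : ℕ} (i : Fin N) (j : Fin M) (w : Fin N → Fin M → ℝ) :
    ∑ a, ∑ b, (if a = i ∧ b = j then (1:ℝ) else 0) * w a b = w i j := by
  classical
  simp [ite_and, ite_mul, Finset.sum_ite_eq']

lemma Epert_mul_sum {N M : ℕ} (i i' : Fin N) (j j' : Fin M) (w : Fin N → Fin M → ℝ) :
    ∑ a, ∑ b, Epert i i' j j' a b * w a b = w i j' + w i' j - w i j - w i' j' := by
  classical
  have e : ∀ a b, Epert i i' j j' a b * w a b =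
      (if a = i ∧ b = j' then (1:ℝ) else 0) * w a b
      + (if a = i' ∧ b = j then (1:ℝ) else 0) * w a b
      - (if a = i ∧ b = j then (1:ℝ) else 0) * w a b
      - (if a = i' ∧ b = j' then (1:ℝ) else 0) * w a b := by
    intro a b; rw [Epert]; ring
  calc ∑ a, ∑ b, Epert i i' j j' a b * w a b
      = ∑ a, ∑ b, ((if a = i ∧ b = j' then (1:ℝ) else 0) * w a b
        + (if a = i' ∧ b = j then (1:ℝ) else 0) * w a b
        - (if a = i ∧ b = j then (1:ℝ) else 0) * w a b
        - (if a = i' ∧ b = j' then (1:ℝ) else 0) * w a b) := by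
          refine Finset.sum_congr rfl fun a _ => Finset.sum_congr rfl fun b _ => e a b
    _ = w i j' + w i' j - w i j - w i' j' := by
        simp only [Finset.sum_sub_distrib, Finset.sum_add_distrib]
        rw [sum_pt i j' w, sum_pt i' j w, sum_pt i j w, sum_pt i' j' w]

lemma Epert_row {N M : ℕ} (i i' : Fin N) (j j' : Fin M) (a : Fin N) :
    ∑ b, Epert i i' j j' a b = 0 := by
  classical
  simp [Epert, ite_and, Finset.sum_add_distrib, Finset.sum_sub_distrib,
    Finset.sum_ite_eq']

lemma Epert_col {N M : ℕ} (i i' : Fin N) (j j' : Fin M) (b : Fin M) :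
    ∑ a, Epert i i' j j' a b = 0 := by
  classical
  simp [Epert, ite_and, Finset.sum_add_distrib, Finset.sum_sub_distrib,
    Finset.sum_ite_eq']

lemma pert_sum {N M : ℕ} (γ : Fin N → Fin M → ℝ) (δ : ℝ) (i i' : Fin N) (j j' : Fin M)
    (w : Fin N → Fin M → ℝ) :
    ∑ a, ∑ b, (γ a b + δ * Epert i i' j j' a b) * w a b =
    (∑ a, ∑ b, γ a b * w a b) + δ * (w i j' + w i' j - w i j - w i' j') := by
  have e : ∀ a b, (γ a b + δ * Epert i i' j j' a b) * w a b =
      γ a b * w a b + δ * (Epert i i' j j' a b * w a b) := by intro a b; ring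
  calc ∑ a, ∑ b, (γ a b + δ * Epert i i' j j' a b) * w a b
      = ∑ a, ∑ b, (γ a b * w a b + δ * (Epert i i' j j' a b * w a b)) := by
        refine Finset.sum_congr rfl fun a _ => Finset.sum_congr rfl fun b _ => e a b
    _ = (∑ a, ∑ b, γ a b * w a b) + δ * ∑ a, ∑ b, Epert i i' j j' a b * w a b := by
        simp only [Finset.sum_add_distrib, Finset.mul_sum]
    _ = (∑ a, ∑ b, γ a b * w a b) + δ * (w i j' + w i' j - w i j - w i' j') := by
        rw [Epert_mul_sum]

lemma pert_row {N M : ℕ} (γ : Fin N → Fin M → ℝ) (δ : ℝ) (i i' : Fin N) (j j' : Fin M)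
    (a : Fin N) :
    ∑ b, (γ a b + δ * Epert i i' j j' a b) = ∑ b, γ a b := by
  rw [Finset.sum_add_distrib, ← Finset.mul_sum, Epert_row, mul_zero, add_zero]

lemma pert_col {N M : ℕ} (γ : Fin N → Fin M → ℝ) (δ : ℝ) (i i' : Fin N) (j j' : Fin M)
    (b : Fin M) :
    ∑ a, (γ a b + δ * Epert i i' j j' a b) = ∑ a, γ a b := by
  rw [Finset.sum_add_distrib, ← Finset.mul_sum, Epert_col, mul_zero, add_zero]

lemma Epert_vals {N M : ℕ} (i i' : Fin N) (j j' : Fin M) (hii : i ≠ i') (hjj : j ≠ j') :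
    Epert i i' j j' i j = -1 ∧ Epert i i' j j' i' j' = -1 ∧
    Epert i i' j j' i j' = 1 ∧ Epert i i' j j' i' j = 1 ∧
    (∀ a b, (a ≠ i ∧ a ≠ i') ∨ (b ≠ j ∧ b ≠ j') → Epert i i' j j' a b = 0) := by
  refine ⟨by simp [Epert, hii, hii.symm, hjj, hjj.symm], by simp [Epert, hii, hii.symm, hjj, hjj.symm], ?_, ?_, ?_⟩
  · simp [Epert, hii, hii.symm, hjj, hjj.symm]
  · simp [Epert, hii, hii.symm, hjj, hjj.symm]
  · rintro a b (⟨h1, h2⟩ | ⟨h1, h2⟩) <;> simp [Epert, h1, h2]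

lemma noncross_eq_astar {N M : ℕ} (f : Fin N → ℝ) (g : Fin M → ℝ)
    (hf : ∀ i, 0 ≤ f i) (hg : ∀ j, 0 ≤ g j)
    (α : Fin N → Fin M → ℝ) (hα0 : ∀ i j, 0 ≤ α i j)
    (hcol : ∀ j, ∑ i, α i j = g j) (hrow : ∀ i, ∑ j, α i j = f i)
    (hnc : ∀ (i i' : Fin N) (j j' : Fin M),
      (i:ℕ) < (i':ℕ) → (j':ℕ) < (j:ℕ) → α i j = 0 ∨ α i' j' = 0) :
    ∀ i j, α i j = astar f g i j := by
  classical
  set C : ℕ → ℕ → ℝ := fun n m =>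
    ∑ i : Fin N, ∑ j : Fin M, if (i:ℕ) < n ∧ (j:ℕ) < m then α i j else 0 with hC
  have hcum : ∀ n m, C n m = min (cumS f n) (cumS g m) := by
    intro n m
    set A : ℝ := ∑ i : Fin N, ∑ j : Fin M, if (i:ℕ) < n ∧ ¬ ((j:ℕ) < m) then α i j else 0 with hA
    set B : ℝ := ∑ i : Fin N, ∑ j : Fin M, if ¬ ((i:ℕ) < n) ∧ (j:ℕ) < m then α i j else 0 with hB
    have hsplit1 : C n m + A = cumS f n := by
      rw [hC, hA, ← Finset.sum_add_distrib]
      unfold cumS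
      refine Finset.sum_congr rfl fun i _ => ?_
      rw [← Finset.sum_add_distrib]
      by_cases hi : (i:ℕ) < n
      · simp only [hi, true_and, if_pos]
        rw [← hrow i]
        refine Finset.sum_congr rfl fun j _ => ?_
        by_cases hj : (j:ℕ) < m <;> simp [hj]
      · simp [hi]
    have hsplit2 : C n m + B = cumS g m := by
      have e1 : C n m = ∑ j : Fin M, ∑ i : Fin N,
          (if (i:ℕ) < n ∧ (j:ℕ) < m then α i j else 0) := by
        rw [hC]; exact Finset.sum_comm
      have e2 : B = ∑ j : Fin M, ∑ i : Fin N,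
          (if ¬ ((i:ℕ) < n) ∧ (j:ℕ) < m then α i j else 0) := by
        rw [hB]; exact Finset.sum_comm
      rw [e1, e2, ← Finset.sum_add_distrib]
      unfold cumS
      refine Finset.sum_congr rfl fun j _ => ?_
      rw [← Finset.sum_add_distrib]
      by_cases hj : (j:ℕ) < m
      · simp only [hj, and_true, if_pos]
        rw [← hcol j]
        refine Finset.sum_congr rfl fun i _ => ?_
        by_cases hi : (i:ℕ) < n <;> simp [hi]
      · simp [hj]
    have hA0 : 0 ≤ A := by
      rw [hA]
      refine Finset.sum_nonneg fun i _ => Finset.sum_nonneg fun j _ => ?_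
      split_ifs <;> [exact hα0 i j; exact le_refl 0]
    have hB0 : 0 ≤ B := by
      rw [hB]
      refine Finset.sum_nonneg fun i _ => Finset.sum_nonneg fun j _ => ?_
      split_ifs <;> [exact hα0 i j; exact le_refl 0]
    have hABzero : A = 0 ∨ B = 0 := by
      by_contra hcontra
      push_neg at hcontra
      obtain ⟨hAne, hBne⟩ := hcontra
      obtain ⟨i, _, hi⟩ := Finset.exists_ne_zero_of_sum_ne_zero (by rw [← hA]; exact hAne)
      obtain ⟨j, _, hj⟩ := Finset.exists_ne_zero_of_sum_ne_zero hi
      obtain ⟨i', _, hi'⟩ := Finset.exists_ne_zero_of_sum_ne_zero (by rw [← hB]; exact hBne)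
      obtain ⟨j', _, hj'⟩ := Finset.exists_ne_zero_of_sum_ne_zero hi'
      have h1 : (i:ℕ) < n ∧ ¬ ((j:ℕ) < m) ∧ α i j ≠ 0 := by
        by_cases hc : (i:ℕ) < n ∧ ¬ ((j:ℕ) < m)
        · exact ⟨hc.1, hc.2, by rwa [if_pos hc] at hj⟩
        · rw [if_neg hc] at hj; exact absurd rfl hj
      have h2 : ¬ ((i':ℕ) < n) ∧ (j':ℕ) < m ∧ α i' j' ≠ 0 := by
        by_cases hc : ¬ ((i':ℕ) < n) ∧ (j':ℕ) < m
        · exact ⟨hc.1, hc.2, by rwa [if_pos hc] at hj'⟩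
        · rw [if_neg hc] at hj'; exact absurd rfl hj'
      have hii : (i:ℕ) < (i':ℕ) := by omega
      have hjj : (j':ℕ) < (j:ℕ) := by omega
      rcases hnc i i' j j' hii hjj with hz | hz
      · exact h1.2.2 hz
      · exact h2.2.2 hz
    rcases hABzero with hz | hz
    · have hCf : C n m = cumS f n := by rw [← hsplit1, hz, add_zero]
      have hle : cumS f n ≤ cumS g m := by
        rw [← hsplit2, ← hCf]; linarith
      rw [hCf, min_eq_left hle]
    · have hCg : C n m = cumS g m := by rw [← hsplit2, hz, add_zero]
      have hle : cumS g m ≤ cumS f n := by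
        rw [← hsplit1, ← hCg]; linarith
      rw [hCg, min_eq_right hle]
  intro i₀ j₀
  have hterm : ∀ (i : Fin N) (j : Fin M),
      (if (i:ℕ) < (i₀:ℕ)+1 ∧ (j:ℕ) < (j₀:ℕ)+1 then α i j else 0)
      - (if (i:ℕ) < (i₀:ℕ) ∧ (j:ℕ) < (j₀:ℕ)+1 then α i j else 0)
      - (if (i:ℕ) < (i₀:ℕ)+1 ∧ (j:ℕ) < (j₀:ℕ) then α i j else 0)
      + (if (i:ℕ) < (i₀:ℕ) ∧ (j:ℕ) < (j₀:ℕ) then α i j else 0)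
      = if i = i₀ ∧ j = j₀ then α i j else 0 := by
    intro i j
    simp only [Fin.ext_iff]
    split_ifs <;> (first | ring1 | (exfalso; omega))
  have hcombo : C ((i₀:ℕ)+1) ((j₀:ℕ)+1) - C (i₀:ℕ) ((j₀:ℕ)+1)
      - C ((i₀:ℕ)+1) (j₀:ℕ) + C (i₀:ℕ) (j₀:ℕ) = α i₀ j₀ := by
    rw [hC]
    simp only [← Finset.sum_sub_distrib, ← Finset.sum_add_distrib]
    rw [Finset.sum_congr rfl fun i _ => Finset.sum_congr rfl fun j _ => hterm i j]
    simp [ite_and, Finset.sum_ite_eq']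
  rw [← hcombo, astar_eq f g hf hg, hcum, hcum, hcum, hcum]

lemma cost_lower_bound {N M : ℕ}
    (f : Fin N → ℝ) (g : Fin M → ℝ) (x : Fin N → ℝ) (y : Fin M → ℝ)
    (hx : Monotone x) (hy : Monotone y)
    (hf : ∀ i, 0 ≤ f i) (hg : ∀ j, 0 ≤ g j)
    (hf1 : ∑ i, f i = 1) (hg1 : ∑ j, g j = 1)
    (h : ℝ → ℝ) (hconv : ConvexOn ℝ (Set.Ici 0) h)
    (hmono : MonotoneOn h (Set.Ici 0)) :
    ∀ α : Fin N → Fin M → ℝ, (∀ i j, 0 ≤ α i j) → (∀ j, ∑ i, α i j = g j) →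
      (∀ i, ∑ j, α i j = f i) →
      (∑ i, ∑ j, astar f g i j * h |x i - y j|) ≤ ∑ i, ∑ j, α i j * h |x i - y j| := by
  classical
  set c : Fin N → Fin M → ℝ := fun i j => h |x i - y j| with hc
  set cost : (Fin N → Fin M → ℝ) → ℝ := fun α => ∑ i, ∑ j, α i j * c i j with hcost
  set K : Set (Fin N → Fin M → ℝ) :=
    {α | (∀ i j, 0 ≤ α i j) ∧ (∀ j, ∑ i, α i j = g j) ∧ (∀ i, ∑ j, α i j = f i)} with hK
  have hcont_eval : ∀ (i : Fin N) (j : Fin M),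
      Continuous (fun α : Fin N → Fin M → ℝ => α i j) :=
    fun i j => (continuous_apply j).comp (continuous_apply i)
  have hKclosed : IsClosed K := by
    have h1 : K = (⋂ (i : Fin N), ⋂ (j : Fin M), {α : Fin N → Fin M → ℝ | 0 ≤ α i j}) ∩
        ((⋂ (j : Fin M), {α : Fin N → Fin M → ℝ | ∑ i, α i j = g j}) ∩
         (⋂ (i : Fin N), {α : Fin N → Fin M → ℝ | ∑ j, α i j = f i})) := by
      ext α
      simp only [hK, Set.mem_setOf_eq, Set.mem_inter_iff, Set.mem_iInter]
    rw [h1]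
    refine IsClosed.inter ?_ (IsClosed.inter ?_ ?_)
    · exact isClosed_iInter fun i => isClosed_iInter fun j =>
        isClosed_le continuous_const (hcont_eval i j)
    · exact isClosed_iInter fun j =>
        isClosed_eq (continuous_finset_sum _ fun i _ => hcont_eval i j) continuous_const
    · exact isClosed_iInter fun i =>
        isClosed_eq (continuous_finset_sum _ fun j _ => hcont_eval i j) continuous_const
  have hKsub : K ⊆ Set.Icc (fun _ _ => (0:ℝ)) (fun _ _ => (1:ℝ)) := by
    rintro α ⟨h0, hcol, hrow⟩
    constructor
    · intro i; intro j; exact h0 i j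
    · intro i; intro j
      calc α i j ≤ ∑ j', α i j' :=
            Finset.single_le_sum (fun j' _ => h0 i j') (Finset.mem_univ j)
        _ = f i := hrow i
        _ ≤ ∑ i', f i' := Finset.single_le_sum (fun i' _ => hf i') (Finset.mem_univ i)
        _ = 1 := hf1
  have hKcpt : IsCompact K := IsCompact.of_isClosed_subset isCompact_Icc hKclosed hKsub
  have hstarK : astar f g ∈ K :=
    ⟨astar_nonneg f g, astar_col f g hf hg hf1 hg1, astar_row f g hf hg hf1 hg1⟩
  have hcont_cost : Continuous cost := by
    rw [hcost]
    exact continuous_finset_sum _ fun i _ => continuous_finset_sum _ fun j _ =>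
      (hcont_eval i j).mul continuous_const
  obtain ⟨α₀, hα₀K, hα₀min⟩ := hKcpt.exists_isMinOn ⟨astar f g, hstarK⟩
    hcont_cost.continuousOn
  set K' : Set (Fin N → Fin M → ℝ) := K ∩ {α | cost α = cost α₀} with hK'
  have hK'cpt : IsCompact K' :=
    hKcpt.inter_right (isClosed_eq hcont_cost continuous_const)
  set Φ : (Fin N → Fin M → ℝ) → ℝ :=
    fun α => ∑ a, ∑ b, α a b * (((a:ℕ):ℝ) * ((M:ℝ) - ((b:ℕ):ℝ))) with hΦ
  have hcont_Φ : Continuous Φ := by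
    rw [hΦ]
    exact continuous_finset_sum _ fun i _ => continuous_finset_sum _ fun j _ =>
      (hcont_eval i j).mul continuous_const
  obtain ⟨β, hβK', hβmin⟩ := hK'cpt.exists_isMinOn ⟨α₀, hα₀K, rfl⟩ hcont_Φ.continuousOn
  obtain ⟨⟨hβ0, hβcol, hβrow⟩, hβcost⟩ := hβK'
  -- submodularity
  have hsubm : ∀ (i i' : Fin N) (j j' : Fin M), (i:ℕ) < (i':ℕ) → (j':ℕ) < (j:ℕ) →
      c i j' + c i' j - c i j - c i' j' ≤ 0 := by
    intro i i' j j' hii hjj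
    have hxii : x i ≤ x i' := hx (le_of_lt hii)
    have hyjj : y j' ≤ y j := hy (le_of_lt hjj)
    have hφ := abs_convexOn h hconv hmono
    have := convex_slide (fun u => h |u|) hφ
      (u := x i - y j) (a := x i - y j') (b := x i' - y j) (v := x i' - y j')
      (by linarith) (by linarith) (by linarith) (by linarith) (by ring)
    simp only [hc]
    linarith [this]
  -- no crossing in β
  have hnc : ∀ (i i' : Fin N) (j j' : Fin M),
      (i:ℕ) < (i':ℕ) → (j':ℕ) < (j:ℕ) → β i j = 0 ∨ β i' j' = 0 := by
    intro i i' j j' hii hjj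
    by_contra hcontra
    push_neg at hcontra
    obtain ⟨hb1, hb2⟩ := hcontra
    have hb1' : 0 < β i j := lt_of_le_of_ne (hβ0 i j) (Ne.symm hb1)
    have hb2' : 0 < β i' j' := lt_of_le_of_ne (hβ0 i' j') (Ne.symm hb2)
    set δ : ℝ := min (β i j) (β i' j') with hδ
    have hδpos : 0 < δ := lt_min hb1' hb2'
    have hine : i ≠ i' := fun hcc => by rw [hcc] at hii; exact lt_irrefl _ hii
    have hjne : j ≠ j' := fun hcc => by rw [hcc] at hjj; exact lt_irrefl _ hjj
    obtain ⟨hEij, hEij', hEij2, hEij3, hEzero⟩ := Epert_vals i i' j j' hine hjne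
    set β' : Fin N → Fin M → ℝ := fun a b => β a b + δ * Epert i i' j j' a b with hβ'
    have hβ'0 : ∀ a b, 0 ≤ β' a b := by
      intro a b
      rw [hβ']
      simp only []
      by_cases ha : a = i ∨ a = i'
      · by_cases hbb : b = j ∨ b = j'
        · rcases ha with rfl | rfl <;> rcases hbb with rfl | rfl
          · rw [hEij]; have := min_le_left (β a b) (β i' j'); rw [hδ]; linarith
          · rw [hEij2]; have := hβ0 a b; linarith
          · rw [hEij3]; have := hβ0 a b; linarith
          · rw [hEij']; have := min_le_right (β i j) (β a b); rw [hδ]; linarith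
        · push_neg at hbb
          rw [hEzero a b (Or.inr hbb), mul_zero, add_zero]; exact hβ0 a b
      · push_neg at ha
        rw [hEzero a b (Or.inl ha), mul_zero, add_zero]; exact hβ0 a b
    have hβ'K : β' ∈ K := by
      refine ⟨hβ'0, ?_, ?_⟩
      · intro b; rw [hβ']; simp only []; rw [pert_col]; exact hβcol b
      · intro a; rw [hβ']; simp only []; rw [pert_row]; exact hβrow a
    have hcostβ' : cost β' = cost β + δ * (c i j' + c i' j - c i j - c i' j') := by
      rw [hcost, hβ']
      simp only []
      rw [pert_sum]
    have hcostle : cost β' ≤ cost β := by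
      rw [hcostβ']
      have := hsubm i i' j j' hii hjj
      nlinarith [hδpos.le]
    have hcostge : cost α₀ ≤ cost β' := hα₀min hβ'K
    have hβ'K' : β' ∈ K' := ⟨hβ'K, le_antisymm (by rw [← hβcost] at hcostge ⊢; linarith)
      (by rw [← hβcost] at hcostge ⊢; exact hcostge)⟩
    have hΦβ' : Φ β' = Φ β + δ * (((i:ℕ):ℝ) * ((M:ℝ) - ((j':ℕ):ℝ))
        + ((i':ℕ):ℝ) * ((M:ℝ) - ((j:ℕ):ℝ)) - ((i:ℕ):ℝ) * ((M:ℝ) - ((j:ℕ):ℝ))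
        - ((i':ℕ):ℝ) * ((M:ℝ) - ((j':ℕ):ℝ))) := by
      rw [hΦ, hβ']
      simp only []
      rw [pert_sum]
    have hkey : (((i:ℕ):ℝ) * ((M:ℝ) - ((j':ℕ):ℝ))
        + ((i':ℕ):ℝ) * ((M:ℝ) - ((j:ℕ):ℝ)) - ((i:ℕ):ℝ) * ((M:ℝ) - ((j:ℕ):ℝ))
        - ((i':ℕ):ℝ) * ((M:ℝ) - ((j':ℕ):ℝ))) < 0 := by
      have hiR : ((i:ℕ):ℝ) < ((i':ℕ):ℝ) := Nat.cast_lt.2 hii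
      have hjR : ((j':ℕ):ℝ) < ((j:ℕ):ℝ) := Nat.cast_lt.2 hjj
      nlinarith
    have hΦlt : Φ β' < Φ β := by
      rw [hΦβ']
      nlinarith
    exact absurd (hβmin hβ'K') (not_le.2 hΦlt)
  have hβeq : ∀ i j, β i j = astar f g i j :=
    noncross_eq_astar f g hf hg β hβ0 hβcol hβrow hnc
  have hcoststar : cost (astar f g) = cost α₀ := by
    rw [← hβcost]
    rw [hcost]
    exact Finset.sum_congr rfl fun i _ => Finset.sum_congr rfl fun j _ => by rw [hβeq i j]
  intro α hα0 hαcol hαrow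
  have : cost α₀ ≤ cost α := hα₀min ⟨hα0, hαcol, hαrow⟩
  calc (∑ i, ∑ j, astar f g i j * h |x i - y j|) = cost (astar f g) := rfl
    _ = cost α₀ := hcoststar
    _ ≤ cost α := this
    _ = ∑ i, ∑ j, α i j * h |x i - y j| := rfl

lemma main_sorted (N M : ℕ)
    (f : Fin N → ℝ) (g : Fin M → ℝ) (x : Fin N → ℝ) (y : Fin M → ℝ)
    (hx : Monotone x) (hy : Monotone y)
    (hf : ∀ i, 0 ≤ f i) (hg : ∀ j, 0 ≤ g j)
    (hf1 : ∑ i, f i = 1) (hg1 : ∑ j, g j = 1)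
    (h : ℝ → ℝ) (hconv : ConvexOn ℝ (Set.Ici 0) h)
    (hmono : MonotoneOn h (Set.Ici 0)) :
    sInf {v : ℝ | ∃ α : Fin N → Fin M → ℝ,
        (∀ i j, 0 ≤ α i j) ∧ (∀ j, ∑ i, α i j = g j) ∧ (∀ i, ∑ j, α i j = f i) ∧
        v = ∑ i, ∑ j, α i j * h |x i - y j|} =
    ∫ t in (0:ℝ)..1,
      h |pseudoInv (fun s => ∑ i, if x i < s then f i else 0) t -
         pseudoInv (fun s => ∑ j, if y j < s then g j else 0) t| := by
  rw [integral_eq_astar_cost f g x y hx hy hf hg hf1 hg1 h]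
  have hmem : (∑ i, ∑ j, astar f g i j * h |x i - y j|) ∈ {v : ℝ | ∃ α : Fin N → Fin M → ℝ,
      (∀ i j, 0 ≤ α i j) ∧ (∀ j, ∑ i, α i j = g j) ∧ (∀ i, ∑ j, α i j = f i) ∧
      v = ∑ i, ∑ j, α i j * h |x i - y j|} :=
    ⟨astar f g, astar_nonneg f g, astar_col f g hf hg hf1 hg1,
      astar_row f g hf hg hf1 hg1, rfl⟩
  have hlb : ∀ v ∈ {v : ℝ | ∃ α : Fin N → Fin M → ℝ,
      (∀ i j, 0 ≤ α i j) ∧ (∀ j, ∑ i, α i j = g j) ∧ (∀ i, ∑ j, α i j = f i) ∧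
      v = ∑ i, ∑ j, α i j * h |x i - y j|},
      (∑ i, ∑ j, astar f g i j * h |x i - y j|) ≤ v := by
    rintro v ⟨α, h0, hcol, hrow, rfl⟩
    exact cost_lower_bound f g x y hx hy hf hg hf1 hg1 h hconv hmono α h0 hcol hrow
  exact le_antisymm (csInf_le ⟨_, fun v hv => hlb v hv⟩ hmem)
    (le_csInf ⟨_, hmem⟩ hlb)

theorem mk_line_convex_eq_quantile_integral (N M : ℕ)
    (f : Fin N → ℝ) (g : Fin M → ℝ) (x : Fin N → ℝ) (y : Fin M → ℝ)
    (hf : ∀ i, 0 ≤ f i) (hg : ∀ j, 0 ≤ g j)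
    (hf1 : ∑ i, f i = 1) (hg1 : ∑ j, g j = 1)
    (h : ℝ → ℝ) (hconv : ConvexOn ℝ (Set.Ici 0) h)
    (hmono : MonotoneOn h (Set.Ici 0)) (hnn : ∀ t ∈ Set.Ici (0 : ℝ), 0 ≤ h t) :
    sInf {v : ℝ | ∃ α : Fin N → Fin M → ℝ,
        (∀ i j, 0 ≤ α i j) ∧ (∀ j, ∑ i, α i j = g j) ∧ (∀ i, ∑ j, α i j = f i) ∧
        v = ∑ i, ∑ j, α i j * h |x i - y j|} =
    ∫ t in (0:ℝ)..1,
      h |pseudoInv (fun s => ∑ i, if x i < s then f i else 0) t -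
         pseudoInv (fun s => ∑ j, if y j < s then g j else 0) t| := by
  classical
  set σ : Equiv.Perm (Fin N) := Tuple.sort x with hσ
  set τ : Equiv.Perm (Fin M) := Tuple.sort y with hτ
  have hxσ : Monotone (x ∘ σ) := Tuple.monotone_sort x
  have hyτ : Monotone (y ∘ τ) := Tuple.monotone_sort y
  have main := main_sorted N M (f ∘ σ) (g ∘ τ) (x ∘ σ) (y ∘ τ) hxσ hyτ
    (fun i => hf (σ i)) (fun j => hg (τ j))
    (by simpa using (Equiv.sum_comp σ f).trans hf1)
    (by simpa using (Equiv.sum_comp τ g).trans hg1) h hconv hmono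
  have hFeq : (fun s => ∑ i, if x i < s then f i else 0) =
      (fun s => ∑ i, if (x ∘ σ) i < s then (f ∘ σ) i else 0) := by
    funext s
    exact (Equiv.sum_comp σ (fun i => if x i < s then f i else 0)).symm
  have hGeq : (fun s => ∑ j, if y j < s then g j else 0) =
      (fun s => ∑ j, if (y ∘ τ) j < s then (g ∘ τ) j else 0) := by
    funext s
    exact (Equiv.sum_comp τ (fun j => if y j < s then g j else 0)).symm
  have hset : {v : ℝ | ∃ α : Fin N → Fin M → ℝ,
        (∀ i j, 0 ≤ α i j) ∧ (∀ j, ∑ i, α i j = g j) ∧ (∀ i, ∑ j, α i j = f i) ∧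
        v = ∑ i, ∑ j, α i j * h |x i - y j|} =
      {v : ℝ | ∃ α : Fin N → Fin M → ℝ,
        (∀ i j, 0 ≤ α i j) ∧ (∀ j, ∑ i, α i j = (g ∘ τ) j) ∧
        (∀ i, ∑ j, α i j = (f ∘ σ) i) ∧
        v = ∑ i, ∑ j, α i j * h |(x ∘ σ) i - (y ∘ τ) j|} := by
    ext v
    simp only [Set.mem_setOf_eq, Function.comp_apply]
    constructor
    · rintro ⟨α, h0, hcol, hrow, rfl⟩
      refine ⟨fun i j => α (σ i) (τ j), fun i j => h0 _ _, ?_, ?_, ?_⟩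
      · intro j
        exact (Equiv.sum_comp σ (fun a => α a (τ j))).trans (hcol (τ j))
      · intro i
        exact (Equiv.sum_comp τ (fun b => α (σ i) b)).trans (hrow (σ i))
      · calc ∑ a, ∑ b, α a b * h |x a - y b|
            = ∑ i, ∑ b, α (σ i) b * h |x (σ i) - y b| :=
              (Equiv.sum_comp σ (fun a => ∑ b, α a b * h |x a - y b|)).symm
          _ = ∑ i, ∑ j, α (σ i) (τ j) * h |x (σ i) - y (τ j)| :=
              Finset.sum_congr rfl fun i _ =>
                (Equiv.sum_comp τ (fun b => α (σ i) b * h |x (σ i) - y b|)).symm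
    · rintro ⟨α, h0, hcol, hrow, rfl⟩
      refine ⟨fun a b => α (σ.symm a) (τ.symm b), fun a b => h0 _ _, ?_, ?_, ?_⟩
      · intro b
        have := (Equiv.sum_comp σ.symm (fun i => α i (τ.symm b))).trans (hcol (τ.symm b))
        simpa using this
      · intro a
        have := (Equiv.sum_comp τ.symm (fun j => α (σ.symm a) j)).trans (hrow (σ.symm a))
        simpa using this
      · calc ∑ i, ∑ j, α i j * h |x (σ i) - y (τ j)|
            = ∑ i, ∑ j, α (σ.symm (σ i)) (τ.symm (τ j)) * h |x (σ i) - y (τ j)| := by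
              simp
          _ = ∑ i, ∑ b, α (σ.symm (σ i)) (τ.symm b) * h |x (σ i) - y b| :=
              Finset.sum_congr rfl fun i _ =>
                Equiv.sum_comp τ (fun b => α (σ.symm (σ i)) (τ.symm b) * h |x (σ i) - y b|)
          _ = ∑ a, ∑ b, α (σ.symm a) (τ.symm b) * h |x a - y b| :=
              Equiv.sum_comp σ (fun a => ∑ b, α (σ.symm a) (τ.symm b) * h |x a - y b|)
  rw [hset, hFeq, hGeq]
  exact main
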